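/- Suppose a differentiable distribution function F on [0,∞) and a differentiable function G on (0,∞) satisfy the Williamson inversion relation F(x)=G(x)+(x/α)G'(x) with G(x)=αx^{-α}∫_0^x t^{α-1}F(t)dt. Then the function R(x) defined so that its Williamson transform is G_R(x)=1/(1-G(x)) satisfies R(x) = 2/(1-G(x)) - (1-F(x))/(1-G(x))^2, whenever G(x)<1. -/

import Mathlib

open MeasureTheory Filter Topology Real Set

theorem stmt8 (α : ℝ) (hα : 0 < α) (F G : ℝ → ℝ)
    (hGdiff : ∀ x > 0, DifferentiableAt ℝ G x)
    (hinv : ∀ x > 0, F x = G x + (x / α) * deriv G x) :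
    ∀ x > 0, G x < 1 →
      (1 / (1 - G x) + (x / α) * deriv (fun y => 1 / (1 - G y)) x)
        = 2 / (1 - G x) - (1 - F x) / (1 - G x) ^ 2 := by
  intro x hx hG
  have hne : 1 - G x ≠ 0 := by linarith
  have hd : HasDerivAt (fun y => 1 / (1 - G y)) (deriv G x / (1 - G x) ^ 2) x := by
    have h1 : HasDerivAt (fun y => 1 - G y) (-(deriv G x)) x :=
      ((hGdiff x hx).hasDerivAt).const_sub 1
    have h2 := h1.inv hne
    simpa [one_div, neg_div, div_eq_mul_inv, Pi.inv_def] using h2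
  rw [hd.deriv]
  have hF := hinv x hx
  have hFx : F x - G x = (x / α) * deriv G x := by linarith
  rw [hF]
  have hα' : α ≠ 0 := hα.ne'
  field_simp
  ring
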